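/- Let f = h + conj(g) be a harmonic mapping on the unit disk 𝔻 and suppose that |f(z)| ≤ k for all z ∈ 𝔻 for some constant k > 0. Then f is normal and ‖f‖_n ≤ 4k/π. -/

import Mathlib

open Complex Metric Set ENNReal Filter

noncomputable section

/-- The open unit disk in the complex plane. -/
def unitDisk : Set ℂ := Metric.ball (0 : ℂ) 1

notation "𝔻" => unitDisk

/-- The chordal distance on ℂ. -/
def chordal (z w : ℂ) : ℝ :=
  ‖z - w‖ /
    (Real.sqrt (1 + ‖z‖ ^ 2) * Real.sqrt (1 + ‖w‖ ^ 2))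

/-- The hyperbolic distance on the unit disk. -/
def hypDist (z w : ℂ) : ℝ :=
  (1 / 2) * Real.log
    ((1 + ‖(z - w) / (1 - (starRingEnd ℂ) z * w)‖) /
     (1 - ‖(z - w) / (1 - (starRingEnd ℂ) z * w)‖))

/-- The harmonic mapping `f = h + conj g`. -/
def harmMap (h g : ℂ → ℂ) : ℂ → ℂ := fun z => h z + (starRingEnd ℂ) (g z)

/-- The quantity `(1 - |z|²) (|h'(z)| + |g'(z)|) / (1 + |f(z)|²)` for `f = h + conj g`. -/
def nQuot (h g : ℂ → ℂ) (z : ℂ) : ℝ :=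
  (1 - ‖z‖ ^ 2) * (‖deriv h z‖ + ‖deriv g z‖) /
    (1 + ‖harmMap h g z‖ ^ 2)

/-- `‖f‖ₙ`, the normality norm of the harmonic mapping `f = h + conj g`,
as an element of `[0, ∞]`. -/
def harmNorm (h g : ℂ → ℂ) : ℝ≥0∞ :=
  ⨆ z ∈ 𝔻, ENNReal.ofReal (nQuot h g z)

/-- `φ` is a conformal automorphism of the unit disk. -/
def IsDiskAut (φ : ℂ → ℂ) : Prop :=
  DifferentiableOn ℂ φ 𝔻 ∧ Set.MapsTo φ 𝔻 𝔻 ∧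
    ∃ ψ : ℂ → ℂ, DifferentiableOn ℂ ψ 𝔻 ∧ Set.MapsTo ψ 𝔻 𝔻 ∧
      (∀ z ∈ 𝔻, ψ (φ z) = z) ∧ (∀ z ∈ 𝔻, φ (ψ z) = z)



def moeb (a : ℂ) : ℂ → ℂ := fun w => (w - a) / (1 - (starRingEnd ℂ) a * w)

lemma moeb_denom_ne (a w : ℂ) (ha : ‖a‖ < 1) (hw : ‖w‖ < 1) :
    1 - (starRingEnd ℂ) a * w ≠ 0 := by
  intro hEq
  have h1 : ‖((starRingEnd ℂ) a * w)‖ < 1 := by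
    rw [norm_mul, Complex.norm_conj]
    nlinarith [norm_nonneg a, norm_nonneg w]
  have : (starRingEnd ℂ) a * w = 1 := by linear_combination -hEq
  rw [this] at h1; simp at h1

lemma moeb_hasDerivAt (a w : ℂ) (ha : ‖a‖ < 1) (hw : ‖w‖ < 1) :
    HasDerivAt (moeb a) ((1 - (Complex.normSq a : ℂ)) / (1 - (starRingEnd ℂ) a * w) ^ 2) w := by
  have hne := moeb_denom_ne a w ha hw
  have h1 : HasDerivAt (fun w : ℂ => w - a) 1 w := (hasDerivAt_id w).sub_const a
  have h2 : HasDerivAt (fun w : ℂ => 1 - (starRingEnd ℂ) a * w) (-(starRingEnd ℂ) a) w := by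
    simpa using ((hasDerivAt_id w).const_mul ((starRingEnd ℂ) a)).const_sub 1
  have := h1.div h2 hne
  have e : moeb a = ((fun w => w - a) / fun w => 1 - (starRingEnd ℂ) a * w) := rfl
  rw [e]; refine this.congr_deriv ?_
  rw [Complex.normSq_eq_conj_mul_self]
  ring

lemma moeb_mapsTo (a : ℂ) (ha : ‖a‖ < 1) :
    Set.MapsTo (moeb a) (ball (0:ℂ) 1) (ball (0:ℂ) 1) := by
  intro w hw
  simp only [mem_ball, dist_zero_right] at hw ⊢
  have hne := moeb_denom_ne a w ha hw
  show ‖((w - a) / (1 - (starRingEnd ℂ) a * w))‖ < 1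
  rw [norm_div, div_lt_one (norm_pos_iff.mpr hne)]
  have key : Complex.normSq (1 - (starRingEnd ℂ) a * w) - Complex.normSq (w - a)
      = (1 - Complex.normSq a) * (1 - Complex.normSq w) := by
    simp only [Complex.normSq_apply, Complex.sub_re, Complex.sub_im, Complex.mul_re,
      Complex.mul_im, Complex.one_re, Complex.one_im, Complex.conj_re, Complex.conj_im]
    ring
  have h1 : Complex.normSq a < 1 := by
    rw [← Complex.sq_norm]; nlinarith [norm_nonneg a]
  have h2 : Complex.normSq w < 1 := by
    rw [← Complex.sq_norm]; nlinarith [norm_nonneg w]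
  have : Complex.normSq (w - a) < Complex.normSq (1 - (starRingEnd ℂ) a * w) := by nlinarith
  have := Real.sqrt_lt_sqrt (Complex.normSq_nonneg _) this
  simpa [Complex.norm_def] using this


/-- Schwarz–Pick at the origin. -/
lemma schwarz_pick_zero (F : ℂ → ℂ) (hF : DifferentiableOn ℂ F (ball (0:ℂ) 1))
    (hmaps : Set.MapsTo F (ball (0:ℂ) 1) (ball (0:ℂ) 1)) :
    ‖(deriv F 0)‖ ≤ 1 - ‖(F 0)‖ ^ 2 := by
  set a : ℂ := F 0 with ha_def
  have ha : ‖a‖ < 1 := by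
    have := hmaps (mem_ball_self one_pos)
    simpa [Complex.norm_def, Complex.dist_eq] using this
  have hsq : Complex.normSq a < 1 := by
    rw [← Complex.sq_norm]; nlinarith [norm_nonneg a]
  set M := moeb a
  have hMF : DifferentiableOn ℂ (M ∘ F) (ball (0:ℂ) 1) := by
    intro w hw
    exact ((moeb_hasDerivAt a (F w) ha (by
        have := hmaps hw; simpa [Complex.dist_eq] using this)).differentiableAt.comp_differentiableWithinAt w (hF w hw))
  have hM0 : (M ∘ F) 0 = 0 := by
    simp [M, moeb, Function.comp, ha_def]
  have hmaps2 : Set.MapsTo (M ∘ F) (ball (0:ℂ) 1) (ball ((M ∘ F) 0) 1) := by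
    rw [hM0]
    exact (moeb_mapsTo a ha).comp hmaps
  have hS := Complex.norm_deriv_le_div_of_mapsTo_ball hMF (hmaps2.mono_right ball_subset_closedBall) one_pos
  have hFd : DifferentiableAt ℂ F 0 :=
    (hF.differentiableAt (isOpen_ball.mem_nhds (mem_ball_self one_pos)))
  have hMd : HasDerivAt M ((1 - (Complex.normSq a : ℂ)) / (1 - (starRingEnd ℂ) a * a) ^ 2) a :=
    moeb_hasDerivAt a a ha ha
  have hchain : deriv (M ∘ F) 0 = ((1 - (Complex.normSq a : ℂ)) / (1 - (starRingEnd ℂ) a * a) ^ 2) * deriv F 0 := by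
    exact (hMd.comp 0 hFd.hasDerivAt).deriv
  have hconj : (starRingEnd ℂ) a * a = (Complex.normSq a : ℂ) :=
    (Complex.normSq_eq_conj_mul_self).symm
  have hderM : ((1 - (Complex.normSq a : ℂ)) / (1 - (starRingEnd ℂ) a * a) ^ 2)
      = 1 / (1 - (Complex.normSq a : ℂ)) := by
    rw [hconj]
    have hne : (1 : ℂ) - (Complex.normSq a : ℂ) ≠ 0 := by
      intro hEq
      have : (Complex.normSq a : ℂ) = 1 := by linear_combination -hEq
      have := congrArg Complex.re this
      simp at this; linarith
    field_simp
  rw [hchain, hderM] at hS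
  rw [norm_mul, norm_div] at hS
  have habs : ‖((1:ℂ) - (Complex.normSq a : ℂ))‖ = 1 - Complex.normSq a := by
    rw [show ((1:ℂ) - (Complex.normSq a : ℂ)) = ((1 - Complex.normSq a : ℝ) : ℂ) by push_cast; ring,
      Complex.norm_real, Real.norm_eq_abs, abs_of_pos (by linarith)]
  simp only [norm_one, habs] at hS
  have hpos : 0 < 1 - Complex.normSq a := by linarith
  rw [one_div, inv_mul_le_iff₀ (by positivity)] at hS
  calc ‖(deriv F 0)‖ ≤ (1 - Complex.normSq a) * (1 / 1) := hS
    _ = 1 - ‖a‖ ^ 2 := by rw [← Complex.sq_norm]; ring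


lemma normSq_cos_eq (u : ℂ) : Complex.normSq (Complex.cos u) =
    Real.cos u.re ^ 2 * Real.cosh u.im ^ 2 + Real.sin u.re ^ 2 * Real.sinh u.im ^ 2 := by
  rw [Complex.cos_eq, ← Complex.ofReal_cos, ← Complex.ofReal_cosh, ← Complex.ofReal_sin,
    ← Complex.ofReal_sinh, ← Complex.ofReal_mul, ← Complex.ofReal_mul, sub_eq_add_neg,
    ← neg_mul, ← Complex.ofReal_neg, Complex.normSq_add_mul_I]
  ring

lemma normSq_sin_eq (u : ℂ) : Complex.normSq (Complex.sin u) =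
    Real.sin u.re ^ 2 * Real.cosh u.im ^ 2 + Real.cos u.re ^ 2 * Real.sinh u.im ^ 2 := by
  rw [Complex.sin_eq, ← Complex.ofReal_cos, ← Complex.ofReal_cosh, ← Complex.ofReal_sin,
    ← Complex.ofReal_sinh, ← Complex.ofReal_mul, ← Complex.ofReal_mul,
    Complex.normSq_add_mul_I]
  ring

lemma strip_facts (u : ℂ) (hu : |u.re| < Real.pi / 4) :
    Complex.cos u ≠ 0 ∧ ‖(Complex.tan u)‖ < 1 := by
  have hpi := Real.pi_pos
  have hcosre : 0 < Real.cos u.re := by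
    apply Real.cos_pos_of_mem_Ioo
    constructor
    · nlinarith [abs_lt.1 hu |>.1]
    · nlinarith [abs_lt.1 hu |>.2]
  have hsinlt : Real.sin u.re ^ 2 < Real.cos u.re ^ 2 := by
    have h2 : Real.cos (2 * u.re) > 0 := by
      apply Real.cos_pos_of_mem_Ioo
      constructor
      · nlinarith [abs_lt.1 hu |>.1]
      · nlinarith [abs_lt.1 hu |>.2]
    have := Real.cos_two_mul u.re
    have hsc := Real.sin_sq_add_cos_sq u.re
    nlinarith
  have hcoshpos : 0 < Real.cosh u.im := Real.cosh_pos _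
  have hnsq : Complex.normSq (Complex.sin u) < Complex.normSq (Complex.cos u) := by
    rw [normSq_cos_eq, normSq_sin_eq]
    have hcsh : Real.cosh u.im ^ 2 = Real.sinh u.im ^ 2 + 1 := Real.cosh_sq u.im
    nlinarith
  have hcosne : Complex.cos u ≠ 0 := by
    intro hEq
    rw [hEq, map_zero] at hnsq
    exact absurd hnsq (not_lt.2 (Complex.normSq_nonneg _))
  refine ⟨hcosne, ?_⟩
  rw [Complex.tan_eq_sin_div_cos, norm_div, div_lt_one (norm_pos_iff.mpr hcosne)]
  have := Real.sqrt_lt_sqrt (Complex.normSq_nonneg _) hnsq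
  simpa [Complex.norm_def] using this

/-- Core estimate: analytic `G` on the unit disk with `|Re G| ≤ k < k'` satisfies
`|G'(0)| ≤ 4 k' / π`. -/
lemma core_zero (G : ℂ → ℂ) (hG : DifferentiableOn ℂ G (ball (0:ℂ) 1))
    (k k' : ℝ) (hk : 0 ≤ k) (hkk' : k < k')
    (hb : ∀ w ∈ ball (0:ℂ) 1, |(G w).re| ≤ k) :
    ‖(deriv G 0)‖ ≤ 4 * k' / Real.pi := by
  have hpi := Real.pi_pos
  have hk' : 0 < k' := lt_of_le_of_lt hk hkk'
  set c : ℝ := Real.pi / (4 * k') with hc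
  have hcpos : 0 < c := by positivity
  have hstrip : ∀ w ∈ ball (0:ℂ) 1, |((c : ℂ) * G w).re| < Real.pi / 4 := by
    intro w hw
    have : ((c : ℂ) * G w).re = c * (G w).re := by
      simp [Complex.mul_re, Complex.ofReal_re, Complex.ofReal_im]
    rw [this, abs_mul, abs_of_pos hcpos]
    calc c * |(G w).re| ≤ c * k := by
          exact mul_le_mul_of_nonneg_left (hb w hw) hcpos.le
      _ < c * k' := by nlinarith
      _ = Real.pi / 4 := by rw [hc]; field_simp
  set F : ℂ → ℂ := fun w => Complex.tan ((c : ℂ) * G w) with hF_def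
  have hdiffF : DifferentiableOn ℂ F (ball (0:ℂ) 1) := by
    intro w hw
    have h1 : DifferentiableWithinAt ℂ (fun w => (c : ℂ) * G w) (ball (0:ℂ) 1) w :=
      (hG w hw).const_mul _
    have h2 : DifferentiableAt ℂ Complex.tan ((c : ℂ) * G w) :=
      Complex.differentiableAt_tan.2 (strip_facts _ (hstrip w hw)).1
    exact h2.comp_differentiableWithinAt w h1
  have hmapsF : Set.MapsTo F (ball (0:ℂ) 1) (ball (0:ℂ) 1) := by
    intro w hw
    simp only [mem_ball, dist_zero_right]
    exact (strip_facts _ (hstrip w hw)).2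
  have hSP := schwarz_pick_zero F hdiffF hmapsF
  -- compute deriv F 0
  have h0 : (0 : ℂ) ∈ ball (0:ℂ) 1 := mem_ball_self one_pos
  set u0 : ℂ := (c : ℂ) * G 0 with hu0
  have hcos0 : Complex.cos u0 ≠ 0 := (strip_facts _ (hstrip 0 h0)).1
  have hGd : DifferentiableAt ℂ G 0 := hG.differentiableAt (isOpen_ball.mem_nhds h0)
  have hinner : HasDerivAt (fun w => (c : ℂ) * G w) ((c : ℂ) * deriv G 0) 0 :=
    hGd.hasDerivAt.const_mul _
  have htan : HasDerivAt Complex.tan (1 / Complex.cos u0 ^ 2) u0 :=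
    Complex.hasDerivAt_tan hcos0
  have hderivF : deriv F 0 = 1 / Complex.cos u0 ^ 2 * ((c : ℂ) * deriv G 0) := by
    have h3 : HasDerivAt Complex.tan (1 / Complex.cos u0 ^ 2) ((fun w => (c : ℂ) * G w) 0) := htan
    exact (h3.comp 0 hinner).deriv
  -- 1 / cos² = 1 + tan²
  set t : ℂ := Complex.tan u0 with ht_def
  have hinv : ((1 : ℂ) + t ^ 2)⁻¹ = Complex.cos u0 ^ 2 := Complex.inv_one_add_tan_sq hcos0
  have htne : (1 : ℂ) + t ^ 2 ≠ 0 := by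
    intro hEq
    rw [hEq, _root_.inv_zero] at hinv
    exact hcos0 (pow_eq_zero_iff two_ne_zero |>.1 hinv.symm)
  have htansq : 1 / Complex.cos u0 ^ 2 = 1 + t ^ 2 := by
    rw [← hinv, one_div, inv_inv]
  have habs1 : 1 - ‖t‖ ^ 2 ≤ ‖(1 + t ^ 2)‖ := by
    have htri := norm_add_le (1 + t ^ 2) (-(t ^ 2))
    have he : (1 + t ^ 2) + (-(t ^ 2)) = 1 := by ring
    rw [he, norm_one, norm_neg, norm_pow] at htri
    linarith
  have hcabs : ‖((c : ℂ))‖ = c := by rw [Complex.norm_real, Real.norm_eq_abs, abs_of_pos hcpos]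
  have hF0 : F 0 = t := rfl
  have hmain : ‖(1 + t ^ 2)‖ * (c * ‖(deriv G 0)‖)
      ≤ 1 - ‖t‖ ^ 2 := by
    have : ‖(deriv F 0)‖
        = ‖(1 + t ^ 2)‖ * (c * ‖(deriv G 0)‖) := by
      rw [hderivF, htansq, norm_mul, norm_mul, hcabs]
    rw [← this]
    calc ‖(deriv F 0)‖ ≤ 1 - ‖(F 0)‖ ^ 2 := hSP
      _ = 1 - ‖t‖ ^ 2 := by rw [hF0]
  have hA : 0 < ‖(1 + t ^ 2)‖ := norm_pos_iff.mpr htne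
  have hle1 : c * ‖(deriv G 0)‖ ≤ 1 := by
    have h2 : ‖(1 + t ^ 2)‖ * (c * ‖(deriv G 0)‖)
        ≤ ‖(1 + t ^ 2)‖ * 1 := by
      rw [mul_one]; linarith
    exact le_of_mul_le_mul_left h2 hA
  have : ‖(deriv G 0)‖ ≤ 1 / c := by
    rw [le_div_iff₀ hcpos]; linarith [mul_comm c (‖(deriv G 0)‖)]
  calc ‖(deriv G 0)‖ ≤ 1 / c := this
    _ = 4 * k' / Real.pi := by rw [hc, one_div_div]


lemma exists_unit_dir (a b : ℂ) : ∃ e : ℂ, ‖e‖ = 1 ∧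
    ‖(e * a + (starRingEnd ℂ) e * b)‖ = ‖a‖ + ‖b‖ := by
  by_cases ha : a = 0
  · exact ⟨1, by simp, by simp [ha]⟩
  by_cases hb : b = 0
  · exact ⟨1, by simp, by simp [hb]⟩
  have hr : 0 < ‖a‖ := norm_pos_iff.mpr ha
  have hs : 0 < ‖b‖ := norm_pos_iff.mpr hb
  obtain ⟨e, he2⟩ := IsAlgClosed.exists_pow_nat_eq
    ((starRingEnd ℂ) a * b / ((‖a‖ * ‖b‖ : ℝ) : ℂ)) (n := 2) (by norm_num)
  have hwabs : ‖((starRingEnd ℂ) a * b /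
      ((‖a‖ * ‖b‖ : ℝ) : ℂ))‖ = 1 := by
    rw [norm_div, norm_mul, Complex.norm_conj, Complex.norm_real, Real.norm_eq_abs, abs_of_pos (by positivity)]
    field_simp
  have heabs : ‖e‖ = 1 := by
    have h1 : ‖e‖ ^ 2 = 1 := by rw [← norm_pow, he2, hwabs]
    nlinarith [norm_nonneg e]
  refine ⟨e, heabs, ?_⟩
  have hee : e * (starRingEnd ℂ) e = 1 := by
    rw [Complex.mul_conj]
    norm_cast
    rw [Complex.normSq_eq_norm_sq, heabs]; norm_num
  have hconj : (starRingEnd ℂ) a * a = ((‖a‖ ^ 2 : ℝ) : ℂ) := by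
    rw [mul_comm, Complex.mul_conj, Complex.normSq_eq_norm_sq]
  have hkey : e * (e * a + (starRingEnd ℂ) e * b)
      = (((‖a‖ + ‖b‖) / ‖b‖ : ℝ) : ℂ) * b := by
    have h1 : e * (e * a + (starRingEnd ℂ) e * b) = e ^ 2 * a + (e * (starRingEnd ℂ) e) * b := by
      ring
    rw [h1, he2, hee, one_mul]
    have hbne : ((‖b‖ : ℝ) : ℂ) ≠ 0 := by
      simpa using hs.ne'
    have hane : ((‖a‖ : ℝ) : ℂ) ≠ 0 := by
      simpa using hr.ne'
    push_cast
    push_cast at hconj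
    field_simp
    linear_combination hconj
  have habs := congrArg (norm : ℂ → ℝ) hkey
  rw [norm_mul, heabs, one_mul, norm_mul, Complex.norm_real, Real.norm_eq_abs, abs_of_pos (by positivity)] at habs
  rw [habs]
  field_simp

lemma key_est (h g : ℂ → ℂ)
    (hh : DifferentiableOn ℂ h 𝔻) (hg : DifferentiableOn ℂ g 𝔻)
    (k : ℝ) (hk : 0 < k) (hbound : ∀ z ∈ 𝔻, ‖(harmMap h g z)‖ ≤ k)
    (z : ℂ) (hz : z ∈ 𝔻) :
    (1 - ‖z‖ ^ 2) * (‖(deriv h z)‖ + ‖(deriv g z)‖)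
      ≤ 4 * k / Real.pi := by
  have hpi := Real.pi_pos
  have hzball : z ∈ ball (0:ℂ) 1 := hz
  have hzlt : ‖z‖ < 1 := by
    simpa [Complex.dist_eq] using hzball
  obtain ⟨e, heabs, heq⟩ := exists_unit_dir (deriv h z) (deriv g z)
  set G : ℂ → ℂ := fun w => e * h w + (starRingEnd ℂ) e * g w with hG_def
  have hGdiff : DifferentiableOn ℂ G (ball (0:ℂ) 1) := fun w hw =>
    ((hh w hw).const_mul e).add ((hg w hw).const_mul _)
  have hGz : DifferentiableAt ℂ G z := hGdiff.differentiableAt (isOpen_ball.mem_nhds hzball)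
  have hhz : DifferentiableAt ℂ h z := hh.differentiableAt (isOpen_ball.mem_nhds hzball)
  have hgz : DifferentiableAt ℂ g z := hg.differentiableAt (isOpen_ball.mem_nhds hzball)
  have hGderiv : deriv G z = e * deriv h z + (starRingEnd ℂ) e * deriv g z :=
    ((hhz.hasDerivAt.const_mul e).add (hgz.hasDerivAt.const_mul _)).deriv
  have hRe : ∀ w ∈ ball (0:ℂ) 1, |(G w).re| ≤ k := by
    intro w hw
    have h3 : ((starRingEnd ℂ) e * g w).re = (e * (starRingEnd ℂ) (g w)).re := by
      rw [show e * (starRingEnd ℂ) (g w) = (starRingEnd ℂ) ((starRingEnd ℂ) e * g w) by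
        rw [map_mul, Complex.conj_conj], Complex.conj_re]
    have hre : (G w).re = (e * harmMap h g w).re := by
      simp only [hG_def, harmMap, mul_add, Complex.add_re, h3]
    rw [hre]
    calc |(e * harmMap h g w).re| ≤ ‖(e * harmMap h g w)‖ := Complex.abs_re_le_norm _
      _ = ‖(harmMap h g w)‖ := by rw [norm_mul, heabs, one_mul]
      _ ≤ k := hbound w hw
  have hgoal : (1 - ‖z‖ ^ 2) * ‖(deriv G z)‖ ≤ 4 * k / Real.pi := by
    apply _root_.le_of_forall_pos_le_add
    intro ε hε
    set k' : ℝ := k + Real.pi * ε / 4 with hk'_def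
    have hkk' : k < k' := by
      have h4 : 0 < Real.pi * ε / 4 := by positivity
      rw [hk'_def]
      linarith
    -- Möbius transfer to the origin
    have hnegz : ‖(-z)‖ < 1 := by simpa using hzlt
    set ψ : ℂ → ℂ := moeb (-z) with hψ_def
    have hψmaps : Set.MapsTo ψ (ball (0:ℂ) 1) (ball (0:ℂ) 1) := moeb_mapsTo (-z) hnegz
    set G2 : ℂ → ℂ := G ∘ ψ with hG2_def
    have hG2diff : DifferentiableOn ℂ G2 (ball (0:ℂ) 1) := by
      intro w hw
      have hw' : ‖w‖ < 1 := by simpa [Complex.dist_eq] using hw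
      have hψd : DifferentiableWithinAt ℂ ψ (ball (0:ℂ) 1) w :=
        (moeb_hasDerivAt (-z) w hnegz hw').differentiableAt.differentiableWithinAt
      exact ((hGdiff _ (hψmaps hw)).differentiableAt
        (isOpen_ball.mem_nhds (hψmaps hw))).comp_differentiableWithinAt w hψd
    have hRe2 : ∀ w ∈ ball (0:ℂ) 1, |(G2 w).re| ≤ k := fun w hw => hRe (ψ w) (hψmaps hw)
    have hcore := core_zero G2 hG2diff k k' hk.le hkk' hRe2
    have hψ0 : ψ 0 = z := by
      simp [hψ_def, moeb]
    have hψd0 : HasDerivAt ψ ((1 - (Complex.normSq (-z) : ℂ)) /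
        (1 - (starRingEnd ℂ) (-z) * 0) ^ 2) 0 :=
      moeb_hasDerivAt (-z) 0 hnegz (by simp)
    have hψd0' : HasDerivAt ψ (1 - (Complex.normSq z : ℂ)) 0 := by
      convert hψd0 using 1
      simp [Complex.normSq_neg]
    have hGz' : HasDerivAt G (deriv G z) (ψ 0) := by rw [hψ0]; exact hGz.hasDerivAt
    have hchain : deriv G2 0 = deriv G z * (1 - (Complex.normSq z : ℂ)) :=
      (hGz'.comp 0 hψd0').deriv
    have hnsq : Complex.normSq z < 1 := by
      rw [← Complex.sq_norm]; nlinarith [norm_nonneg z]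
    have habs2 : ‖(deriv G2 0)‖
        = ‖(deriv G z)‖ * (1 - Complex.normSq z) := by
      rw [hchain, norm_mul]
      congr 1
      rw [show (1 : ℂ) - (Complex.normSq z : ℂ) = ((1 - Complex.normSq z : ℝ) : ℂ) by
        push_cast; ring, Complex.norm_real, Real.norm_eq_abs, abs_of_pos (by linarith)]
    have hfin : (1 - ‖z‖ ^ 2) * ‖(deriv G z)‖ ≤ 4 * k' / Real.pi := by
      rw [← Complex.sq_norm] at habs2
      calc (1 - ‖z‖ ^ 2) * ‖(deriv G z)‖
          = ‖(deriv G2 0)‖ := by rw [habs2]; ring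
        _ ≤ 4 * k' / Real.pi := hcore
    calc (1 - ‖z‖ ^ 2) * ‖(deriv G z)‖ ≤ 4 * k' / Real.pi := hfin
      _ = 4 * k / Real.pi + ε := by rw [hk'_def]; field_simp
  calc (1 - ‖z‖ ^ 2) * (‖(deriv h z)‖ + ‖(deriv g z)‖)
      = (1 - ‖z‖ ^ 2) * ‖(deriv G z)‖ := by rw [hGderiv, heq]
    _ ≤ 4 * k / Real.pi := hgoal

theorem harmNorm_le_of_bounded (h g : ℂ → ℂ)
    (hh : DifferentiableOn ℂ h 𝔻) (hg : DifferentiableOn ℂ g 𝔻)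
    (k : ℝ) (hk : 0 < k) (hbound : ∀ z ∈ 𝔻, ‖(harmMap h g z)‖ ≤ k) :
    harmNorm h g ≤ ENNReal.ofReal (4 * k / Real.pi) := by
  have hpi := Real.pi_pos
  rw [harmNorm]
  apply iSup₂_le
  intro z hz
  apply ENNReal.ofReal_le_ofReal
  have hzlt : ‖z‖ < 1 := by
    simpa [unitDisk, Complex.dist_eq] using hz
  have hnum : 0 ≤ (1 - ‖z‖ ^ 2) * (‖(deriv h z)‖ + ‖(deriv g z)‖) := by
    have h1 : ‖z‖ ^ 2 ≤ 1 := by nlinarith [norm_nonneg z]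
    have := norm_nonneg (deriv h z)
    have := norm_nonneg (deriv g z)
    nlinarith
  have hden : 1 ≤ 1 + ‖(harmMap h g z)‖ ^ 2 := by
    nlinarith [norm_nonneg (harmMap h g z)]
  calc nQuot h g z
      ≤ (1 - ‖z‖ ^ 2) * (‖(deriv h z)‖ + ‖(deriv g z)‖) :=
        div_le_self hnum hden
    _ ≤ 4 * k / Real.pi := key_est h g hh hg k hk hbound z hz
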